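/- Let α ≥ 1 and β ≥ 1 be integers, let G = (G₁,G₂) ∈ ℂ[X,Y]² satisfy det J_G(X,Y) = c·X^{β−α−1} identically for some nonzero constant c ∈ ℂ (in particular β ≥ α+1), let H ∈ ℂ[U,V] be irreducible with zero set {(u,v) : H(u,v) = 0} = {G(0,y) : y ∈ ℂ}, and let γ ≥ 1 be an integer and S ∈ ℂ[X,Y] with S(0,Y) ≢ 0 and H(G(X,Y)) = X^{γ}·S(X,Y). If γ = 1, then β − α − 1 = 0, and for every Y₀ ∈ ℂ one has S(0,Y₀) = 0 if and only if G(0,Y₀) is a singular point of the curve {H = 0}. -/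

import Mathlib

open MvPolynomial Filter

abbrev PolyPair := MvPolynomial (Fin 2) ℂ × MvPolynomial (Fin 2) ℂ

noncomputable def eval2 (p : MvPolynomial (Fin 2) ℂ) (x y : ℂ) : ℂ :=
  MvPolynomial.eval ![x, y] p

noncomputable def jacDet (P Q : MvPolynomial (Fin 2) ℂ) : MvPolynomial (Fin 2) ℂ :=
  pderiv 0 P * pderiv 1 Q - pderiv 1 P * pderiv 0 Q

noncomputable def polyMap (F : PolyPair) (p : ℂ × ℂ) : ℂ × ℂ :=
  (eval2 F.1 p.1 p.2, eval2 F.2 p.1 p.2)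

/-- `F` is a Keller mapping: its Jacobian determinant is a nonzero constant. -/
def IsKeller (F : PolyPair) : Prop :=
  ∃ c : ℂ, c ≠ 0 ∧ jacDet F.1 F.2 = MvPolynomial.C c

/-- `(u₀,v₀)` is a singular point of the plane curve `{H = 0}`. -/
def IsSingularPoint (H : MvPolynomial (Fin 2) ℂ) (p : ℂ × ℂ) : Prop :=
  eval2 H p.1 p.2 = 0 ∧ eval2 (pderiv 0 H) p.1 p.2 = 0 ∧ eval2 (pderiv 1 H) p.1 p.2 = 0

/-- `G` is the `R`-dual of `F`, where `R(x,y) = (x^{-α}, x^β y + x^{-α} φ(x))`. -/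
def IsRDual (F G : PolyPair) (α β : ℕ) (φ : Polynomial ℂ) : Prop :=
  ∀ x : ℂ, x ≠ 0 → ∀ y : ℂ,
    polyMap G (x, y) = polyMap F ((x ^ α)⁻¹, x ^ β * y + (x ^ α)⁻¹ * Polynomial.eval x φ)

/-- `p` is an asymptotic value of `F` : a limit of `F` along a curve tending to infinity. -/
def IsAsympValue (F : PolyPair) (p : ℂ × ℂ) : Prop :=
  ∃ γ : ℝ → ℂ × ℂ, Continuous γ ∧ Tendsto (fun t => ‖γ t‖) atTop atTop ∧
    Tendsto (fun t => polyMap F (γ t)) atTop (nhds p)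

/-- `F` is a polynomial automorphism of `ℂ²`. -/
def IsPolyAuto (F : PolyPair) : Prop :=
  ∃ Finv : PolyPair, (∀ p, polyMap F (polyMap Finv p) = p) ∧
    (∀ p, polyMap Finv (polyMap F p) = p)

noncomputable def toUV (p : MvPolynomial (Fin 2) ℂ) : Polynomial (Polynomial ℂ) :=
  aeval ![Polynomial.C Polynomial.X, Polynomial.X] p

lemma eval_toUV (p : MvPolynomial (Fin 2) ℂ) (u v : ℂ) :
    eval2 p u v = Polynomial.eval v ((toUV p).map (Polynomial.evalRingHom u)) := by
  induction p using MvPolynomial.induction_on with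
  | C a => simp [eval2, toUV]
  | add p q hp hq =>
      simp only [eval2, toUV, map_add, Polynomial.map_add, Polynomial.eval_add] at hp hq ⊢; rw [hp, hq]
  | mul_X p i hp =>
      simp only [eval2, toUV] at hp
      fin_cases i <;>
        simp only [eval2, toUV, map_mul, Polynomial.map_mul, Polynomial.eval_mul,
          Fin.mk_zero, Fin.mk_one,
          aeval_X, eval_X, Matrix.cons_val_zero, Matrix.cons_val_one, Matrix.head_cons,
          Polynomial.map_C, Polynomial.eval_C, Polynomial.map_X, Polynomial.eval_X,
          Polynomial.coe_evalRingHom, hp] <;> ring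

lemma toUV_pderiv (p : MvPolynomial (Fin 2) ℂ) :
    toUV (pderiv 1 p) = Polynomial.derivative (toUV p) := by
  induction p using MvPolynomial.induction_on with
  | C a => simp [toUV]
  | add p q hp hq => simp only [map_add, toUV, Polynomial.derivative_add] at hp hq ⊢; rw [hp, hq]
  | mul_X p i hp =>
      fin_cases i <;>
        simp only [toUV] at hp <;>
        simp only [pderiv_mul, pderiv_X_self, Fin.mk_zero, Fin.mk_one,
          pderiv_X_of_ne (by decide : (0:Fin 2) ≠ 1), pderiv_X_of_ne (by decide : (1:Fin 2) ≠ 0),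
          map_add, map_mul, toUV, Polynomial.derivative_mul, mul_one, mul_zero, add_zero,
          Polynomial.derivative_C, Polynomial.derivative_X, hp,
          aeval_X, Matrix.cons_val_zero, Matrix.cons_val_one, Matrix.head_cons] <;> ring

lemma pderiv_aeval2 (H : MvPolynomial (Fin 2) ℂ) (g : Fin 2 → MvPolynomial (Fin 2) ℂ) (i : Fin 2) :
    pderiv i (aeval g H) =
      aeval g (pderiv 0 H) * pderiv i (g 0) + aeval g (pderiv 1 H) * pderiv i (g 1) := by
  induction H using MvPolynomial.induction_on with
  | C a => simp
  | add p q hp hq => simp only [map_add, hp, hq]; ring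
  | mul_X p j hp =>
      fin_cases j <;>
        simp only [pderiv_mul, pderiv_X_self, Fin.mk_zero, Fin.mk_one,
          pderiv_X_of_ne (by decide : (0:Fin 2) ≠ 1),
          pderiv_X_of_ne (by decide : (1:Fin 2) ≠ 0), map_add, map_mul, aeval_X, hp,
          mul_one, mul_zero, add_zero, map_one, map_zero] <;> ring

lemma eval_aeval2 (p : MvPolynomial (Fin 2) ℂ) (g : Fin 2 → MvPolynomial (Fin 2) ℂ)
    (x : Fin 2 → ℂ) :
    MvPolynomial.eval x (aeval g p) = MvPolynomial.eval (fun i => MvPolynomial.eval x (g i)) p := by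
  induction p using MvPolynomial.induction_on with
  | C a => simp
  | add p q hp hq => simp only [map_add, eval_add, hp, hq]
  | mul_X p j hp => simp only [map_mul, eval_mul, aeval_X, eval_X, hp]

lemma not_singleton_zeroset (H : MvPolynomial (Fin 2) ℂ) (p₀ : ℂ × ℂ)
    (h : {p : ℂ × ℂ | eval2 H p.1 p.2 = 0} = {p₀}) : False := by
  have hmem : ∀ u v : ℂ, eval2 H u v = 0 ↔ (u, v) = p₀ := by
    intro u v
    constructor
    · intro h0
      have : ((u, v) : ℂ × ℂ) ∈ {p : ℂ × ℂ | eval2 H p.1 p.2 = 0} := h0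
      rw [h] at this; exact this
    · intro he
      have : ((u, v) : ℂ × ℂ) ∈ ({p₀} : Set (ℂ × ℂ)) := he
      rw [← h] at this; exact this
  have hk : ∀ k, 1 ≤ k → (toUV H).coeff k = 0 := by
    intro k hk1
    apply Polynomial.eq_zero_of_infinite_isRoot
    apply Set.Infinite.mono (s := {u : ℂ | u ≠ p₀.1})
    swap
    · exact Set.Finite.infinite_compl (Set.finite_singleton p₀.1)
    intro u hu
    have hnoroot : ∀ v : ℂ, Polynomial.eval v ((toUV H).map (Polynomial.evalRingHom u)) ≠ 0 := by
      intro v hv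
      rw [← eval_toUV] at hv
      have := (hmem u v).1 hv
      exact hu (by rw [← this])
    have hdeg : ((toUV H).map (Polynomial.evalRingHom u)).degree = 0 := by
      by_contra hd
      obtain ⟨v, hv⟩ := IsAlgClosed.exists_root _ hd
      exact hnoroot v hv
    have : ((toUV H).map (Polynomial.evalRingHom u)).coeff k = 0 :=
      Polynomial.coeff_eq_zero_of_degree_lt (by rw [hdeg]; exact_mod_cast hk1)
    rw [Polynomial.coeff_map] at this
    exact this
  have hC : toUV H = Polynomial.C ((toUV H).coeff 0) := by
    ext n
    cases n with
    | zero => simp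
    | succ m => simp [Polynomial.coeff_C, hk (m + 1) (by omega)]
  have hconst : ∀ u v : ℂ, eval2 H u v = Polynomial.eval u ((toUV H).coeff 0) := by
    intro u v
    rw [eval_toUV, hC]
    simp
  have h1 : eval2 H p₀.1 p₀.2 = 0 := (hmem p₀.1 p₀.2).2 (by rfl)
  have h2 : eval2 H p₀.1 (p₀.2 + 1) = 0 := by rw [hconst, ← hconst p₀.1 p₀.2]; exact h1
  have := (hmem p₀.1 (p₀.2 + 1)).1 h2
  have : p₀.2 + 1 = p₀.2 := by
    have := congrArg Prod.snd this
    simpa using this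
  simp at this

lemma eval2_mul_forall_zero (S T : MvPolynomial (Fin 2) ℂ)
    (hST : ∀ y : ℂ, eval2 S 0 y * eval2 T 0 y = 0)
    (hS : ∃ y : ℂ, eval2 S 0 y ≠ 0) : ∀ y : ℂ, eval2 T 0 y = 0 := by
  set s := (toUV S).map (Polynomial.evalRingHom 0) with hs
  set t := (toUV T).map (Polynomial.evalRingHom 0) with ht
  have hst : s * t = 0 := by
    apply Polynomial.funext
    intro y
    rw [Polynomial.eval_mul, ← eval_toUV, ← eval_toUV]
    simpa using hST y
  obtain ⟨y₀, hy₀⟩ := hS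
  have hsne : s ≠ 0 := by
    intro h0
    rw [eval_toUV, ← hs, h0] at hy₀
    simp at hy₀
  have : t = 0 := by
    rcases mul_eq_zero.1 hst with h | h
    · exact absurd h hsne
    · exact h
  intro y
  rw [eval_toUV, ← ht, this]
  simp

lemma eval2_const_of_pderiv (P : MvPolynomial (Fin 2) ℂ)
    (h : ∀ y : ℂ, eval2 (pderiv 1 P) 0 y = 0) : ∀ y : ℂ, eval2 P 0 y = eval2 P 0 0 := by
  set p := (toUV P).map (Polynomial.evalRingHom 0) with hp
  have hder : Polynomial.derivative p = 0 := by
    rw [hp, Polynomial.derivative_map, ← toUV_pderiv]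
    apply Polynomial.funext
    intro y
    rw [← eval_toUV]
    simpa using h y
  obtain ⟨a, ha⟩ : ∃ a, p = Polynomial.C a := ⟨_, Polynomial.eq_C_of_derivative_eq_zero hder⟩
  intro y
  rw [eval_toUV, eval_toUV, ← hp, ha]
  simp

set_option maxHeartbeats 2000000 in
theorem gamma_eq_one_case (α β : ℕ) (hα : 1 ≤ α) (hβ1 : 1 ≤ β)
    (G : PolyPair) (c : ℂ) (hc : c ≠ 0)
    (hdet : jacDet G.1 G.2 = MvPolynomial.C c * (X 0 : MvPolynomial (Fin 2) ℂ) ^ (β - α - 1))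
    (hβ : α + 1 ≤ β)
    (H : MvPolynomial (Fin 2) ℂ) (hH : Irreducible H)
    (hzero : {p : ℂ × ℂ | eval2 H p.1 p.2 = 0} = {p : ℂ × ℂ | ∃ y : ℂ, p = polyMap G (0, y)})
    (γ : ℕ) (hγ : 1 ≤ γ) (S : MvPolynomial (Fin 2) ℂ)
    (hS0 : ∃ y : ℂ, eval2 S 0 y ≠ 0)
    (hfac : aeval ![G.1, G.2] H = (X 0 : MvPolynomial (Fin 2) ℂ) ^ γ * S)
    (hγ1 : γ = 1) :
    β - α - 1 = 0 ∧
      ∀ Y₀ : ℂ, (eval2 S 0 Y₀ = 0 ↔ IsSingularPoint H (polyMap G (0, Y₀))) := by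
  subst hγ1
  set g : Fin 2 → MvPolynomial (Fin 2) ℂ := ![G.1, G.2] with hg
  have hg0 : g 0 = G.1 := rfl
  have hg1 : g 1 = G.2 := rfl
  set A : MvPolynomial (Fin 2) ℂ := aeval g (pderiv 0 H) with hA
  set B : MvPolynomial (Fin 2) ℂ := aeval g (pderiv 1 H) with hB
  -- the two differentiated equations
  have E1 : A * pderiv 0 G.1 + B * pderiv 0 G.2 = S + X 0 * pderiv 0 S := by
    have := congrArg (pderiv (0 : Fin 2)) hfac
    rw [pderiv_aeval2, hg0, hg1] at this
    rw [← hA, ← hB] at this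
    rw [this, pow_one, pderiv_mul, pderiv_X_self]
    ring
  have E2 : A * pderiv 1 G.1 + B * pderiv 1 G.2 = X 0 * pderiv 1 S := by
    have := congrArg (pderiv (1 : Fin 2)) hfac
    rw [pderiv_aeval2, hg0, hg1] at this
    rw [← hA, ← hB] at this
    rw [this, pow_one, pderiv_mul, pderiv_X_of_ne (by decide : (0 : Fin 2) ≠ 1)]
    ring
  have idA : A * jacDet G.1 G.2 =
      (S + X 0 * pderiv 0 S) * pderiv 1 G.2 - (X 0 * pderiv 1 S) * pderiv 0 G.2 := by
    simp only [jacDet]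
    linear_combination (pderiv 1 G.2) * E1 - (pderiv 0 G.2) * E2
  have idB : B * jacDet G.1 G.2 =
      (X 0 * pderiv 1 S) * pderiv 0 G.1 - (S + X 0 * pderiv 0 S) * pderiv 1 G.1 := by
    simp only [jacDet]
    linear_combination (pderiv 0 G.1) * E2 - (pderiv 1 G.1) * E1
  -- Part 1
  have part1 : β - α - 1 = 0 := by
    by_contra hne
    have hpow : ∀ y : ℂ, MvPolynomial.eval ![(0:ℂ), y] (jacDet G.1 G.2) = 0 := by
      intro y
      rw [hdet]
      simp [zero_pow hne]
    have hA0 : ∀ y : ℂ, eval2 S 0 y * eval2 (pderiv 1 G.2) 0 y = 0 := by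
      intro y
      have := congrArg (MvPolynomial.eval ![(0:ℂ), y]) idA
      simp only [map_mul, map_add, map_sub, eval_X, Matrix.cons_val_zero, hpow y, mul_zero,
        zero_mul, zero_add, sub_zero, add_zero] at this
      simpa [eval2] using this.symm
    have hB0 : ∀ y : ℂ, eval2 S 0 y * eval2 (pderiv 1 G.1) 0 y = 0 := by
      intro y
      have := congrArg (MvPolynomial.eval ![(0:ℂ), y]) idB
      simp only [map_mul, map_add, map_sub, eval_X, Matrix.cons_val_zero, hpow y, mul_zero,
        zero_mul, zero_add, zero_sub, add_zero, neg_eq_zero] at this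
      have := this.symm
      simpa [eval2] using this
    have hG2 := eval2_mul_forall_zero S _ hA0 hS0
    have hG1 := eval2_mul_forall_zero S _ hB0 hS0
    have hc1 := eval2_const_of_pderiv G.1 hG1
    have hc2 := eval2_const_of_pderiv G.2 hG2
    have hpt : ∀ y : ℂ, polyMap G (0, y) = polyMap G (0, 0) := by
      intro y
      simp only [polyMap]
      rw [hc1 y, hc2 y]
    have hsingle : {p : ℂ × ℂ | eval2 H p.1 p.2 = 0} = {polyMap G (0, 0)} := by
      rw [hzero]
      ext p
      simp only [Set.mem_setOf_eq, Set.mem_singleton_iff]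
      constructor
      · rintro ⟨y, rfl⟩; rw [hpt y]
      · intro h; exact ⟨0, h⟩
    exact not_singleton_zeroset H _ hsingle
  refine ⟨part1, ?_⟩
  have hdet' : jacDet G.1 G.2 = MvPolynomial.C c := by
    rw [hdet, part1, pow_zero, mul_one]
  intro Y₀
  -- evaluation at the point
  have hfun : (fun i => MvPolynomial.eval ![(0:ℂ), Y₀] (g i)) =
      ![eval2 G.1 0 Y₀, eval2 G.2 0 Y₀] := by
    funext i
    fin_cases i <;> rfl
  have hptval : ∀ P : MvPolynomial (Fin 2) ℂ,
      eval2 P (polyMap G (0, Y₀)).1 (polyMap G (0, Y₀)).2 =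
        MvPolynomial.eval ![(0:ℂ), Y₀] (aeval g P) := by
    intro P
    rw [eval_aeval2, hfun]
    rfl
  set s₀ := eval2 S 0 Y₀ with hs₀
  set a := MvPolynomial.eval ![(0:ℂ), Y₀] A with ha
  set b := MvPolynomial.eval ![(0:ℂ), Y₀] B with hb
  set g1y := eval2 (pderiv 1 G.1) 0 Y₀ with hg1y
  set g2y := eval2 (pderiv 1 G.2) 0 Y₀ with hg2y
  have eqa : a * c = s₀ * g2y := by
    have := congrArg (MvPolynomial.eval ![(0:ℂ), Y₀]) idA
    rw [hdet'] at this
    simp only [map_mul, map_add, map_sub, eval_X, eval_C, Matrix.cons_val_zero, zero_mul,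
      mul_zero, add_zero, sub_zero] at this
    rw [hs₀, hg2y]
    simpa [eval2] using this
  have eqb : b * c = -(s₀ * g1y) := by
    have := congrArg (MvPolynomial.eval ![(0:ℂ), Y₀]) idB
    rw [hdet'] at this
    simp only [map_mul, map_add, map_sub, eval_X, eval_C, Matrix.cons_val_zero, zero_mul,
      mul_zero, add_zero, zero_sub] at this
    rw [hs₀, hg1y]
    simpa [eval2] using this
  have hH0 : eval2 H (polyMap G (0, Y₀)).1 (polyMap G (0, Y₀)).2 = 0 := by
    rw [hptval, hfac]
    simp
  have hsingiff : IsSingularPoint H (polyMap G (0, Y₀)) ↔ a = 0 ∧ b = 0 := by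
    unfold IsSingularPoint
    rw [hptval (pderiv 0 H), hptval (pderiv 1 H), ← hA, ← hB, ← ha, ← hb]
    exact ⟨fun h => h.2, fun h => ⟨hH0, h⟩⟩
  rw [hsingiff]
  constructor
  · intro hs
    constructor
    · have := eqa
      rw [hs, zero_mul] at this
      exact (mul_eq_zero.1 this).resolve_right hc
    · have := eqb
      rw [hs, zero_mul, neg_zero] at this
      exact (mul_eq_zero.1 this).resolve_right hc
  · rintro ⟨ha0, hb0⟩
    by_contra hsne
    have h2 : s₀ * g2y = 0 := by rw [← eqa, ha0, zero_mul]
    have h1 : s₀ * g1y = 0 := by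
      have h := eqb
      rw [hb0, zero_mul] at h
      exact neg_eq_zero.mp h.symm
    have hg2 : g2y = 0 := (mul_eq_zero.1 h2).resolve_left hsne
    have hg1 : g1y = 0 := (mul_eq_zero.1 h1).resolve_left hsne
    have := congrArg (MvPolynomial.eval ![(0:ℂ), Y₀]) hdet'
    simp only [jacDet, map_mul, map_sub, eval_C] at this
    rw [show MvPolynomial.eval ![(0:ℂ), Y₀] (pderiv 1 G.2) = g2y from rfl,
      show MvPolynomial.eval ![(0:ℂ), Y₀] (pderiv 1 G.1) = g1y from rfl] at this
    rw [hg1, hg2] at this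
    simp at this
    exact hc this.symm
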